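/- Let k be a field, r ≥ 1, and A = k[x,y]/(x^2, x·y^r) with maximal ideal m = (x,y). Then ℓ(A/m^{n+1}) = 2n+1 for 0 ≤ n ≤ r and ℓ(A/m^{n+1}) = n + r + 1 for n > r. -/
import Mathlib

open MvPolynomial

set_option synthInstance.maxHeartbeats 1000000
set_option maxHeartbeats 1000000

namespace Stmt12Aux

lemma s00 (a : ℕ) : (Finsupp.single (0:Fin 2) a) 0 = a := Finsupp.single_eq_same
lemma s01 (a : ℕ) : (Finsupp.single (0:Fin 2) a) 1 = 0 := Finsupp.single_eq_of_ne (by decide)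
lemma s10 (a : ℕ) : (Finsupp.single (1:Fin 2) a) 0 = 0 := Finsupp.single_eq_of_ne (by decide)
lemma s11 (a : ℕ) : (Finsupp.single (1:Fin 2) a) 1 = a := Finsupp.single_eq_same

lemma fin2_decomp (d : Fin 2 →₀ ℕ) : d = Finsupp.single 0 (d 0) + Finsupp.single 1 (d 1) := by
  ext i
  fin_cases i <;> simp [Finsupp.add_apply, s00, s01, s10, s11]

lemma le_iff2 (t d : Fin 2 →₀ ℕ) : t ≤ d ↔ t 0 ≤ d 0 ∧ t 1 ≤ d 1 := by
  rw [Finsupp.le_def, Fin.forall_fin_two]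

noncomputable def Sset (r n : ℕ) : Finset (Fin 2 →₀ ℕ) :=
  ((Finset.range (n+1)).image fun b => Finsupp.single 1 b) ∪
  ((Finset.range (min r n)).image fun b => Finsupp.single 0 1 + Finsupp.single 1 b)

def Tset (r n : ℕ) : Set (Fin 2 →₀ ℕ) :=
  {Finsupp.single 0 2, Finsupp.single 0 1 + Finsupp.single 1 r} ∪ {d | d 0 + d 1 = n + 1}

lemma mem_Sset (r n : ℕ) (d : Fin 2 →₀ ℕ) :
    d ∈ Sset r n ↔ (d 0 = 0 ∧ d 1 ≤ n) ∨ (d 0 = 1 ∧ d 1 < min r n) := by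
  simp only [Sset, Finset.mem_union, Finset.mem_image, Finset.mem_range]
  constructor
  · rintro (⟨b, hb, rfl⟩ | ⟨b, hb, rfl⟩)
    · exact Or.inl ⟨by simp [s10], by simp [s11]; omega⟩
    · exact Or.inr ⟨by simp [Finsupp.add_apply, s00, s10],
        by simp [Finsupp.add_apply, s01, s11]; omega⟩
  · rintro (⟨h0, h1⟩ | ⟨h0, h1⟩)
    · refine Or.inl ⟨d 1, by omega, ?_⟩
      conv_rhs => rw [fin2_decomp d]
      rw [h0]; simp
    · refine Or.inr ⟨d 1, by omega, ?_⟩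
      conv_rhs => rw [fin2_decomp d]
      rw [h0]

lemma Sset_compl (r n : ℕ) (d : Fin 2 →₀ ℕ) :
    d ∈ Sset r n ↔ ¬ ∃ t ∈ Tset r n, t ≤ d := by
  rw [mem_Sset]
  constructor
  · rintro (⟨h0, h1⟩ | ⟨h0, h1⟩) ⟨t, ht, htd⟩ <;>
    · rw [le_iff2] at htd
      rcases ht with (rfl | rfl) | ht <;>
        simp only [Finsupp.add_apply, s00, s01, s10, s11, Set.mem_setOf_eq] at * <;> omega
  · intro hne
    by_cases h2 : 2 ≤ d 0
    · exact absurd ⟨Finsupp.single 0 2, Or.inl (Or.inl rfl),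
        by rw [le_iff2]; simp [s00, s01]; omega⟩ hne
    by_cases hdeg : n + 1 ≤ d 0 + d 1
    · refine absurd ⟨Finsupp.single 0 (min (d 0) (n+1)) + Finsupp.single 1 (n + 1 - min (d 0) (n+1)),
        Or.inr ?_, ?_⟩ hne
      · simp only [Set.mem_setOf_eq, Finsupp.add_apply, s00, s01, s10, s11]; omega
      · rw [le_iff2]
        simp only [Finsupp.add_apply, s00, s01, s10, s11]; omega
    by_cases hxy : d 0 = 1 ∧ r ≤ d 1
    · refine absurd ⟨Finsupp.single 0 1 + Finsupp.single 1 r, Or.inl (Or.inr rfl), ?_⟩ hne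
      rw [le_iff2]
      simp only [Finsupp.add_apply, s00, s01, s10, s11]; omega
    · omega

lemma Sset_card (r n : ℕ) : (Sset r n).card = (n + 1) + min r n := by
  rw [Sset, Finset.card_union_of_disjoint, Finset.card_image_of_injective,
    Finset.card_image_of_injective, Finset.card_range, Finset.card_range]
  · intro a b hab
    have := congrArg (fun f : Fin 2 →₀ ℕ => f 1) hab
    simpa [Finsupp.add_apply, s01, s11] using this
  · exact Finsupp.single_injective 1
  · rw [Finset.disjoint_left]
    rintro a ha hb
    rw [Finset.mem_image] at ha hb
    obtain ⟨b1, _, rfl⟩ := ha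
    obtain ⟨b2, _, hb2⟩ := hb
    have := congrArg (fun f : Fin 2 →₀ ℕ => f 0) hb2
    simp [Finsupp.add_apply, s00, s10] at this

variable (k : Type*) [Field k]

lemma supp_subset_of_mem_span (S : Finset (Fin 2 →₀ ℕ)) (p : MvPolynomial (Fin 2) k)
    (hp : p ∈ Submodule.span k (Set.range fun s : S => monomial (s : Fin 2 →₀ ℕ) (1:k))) :
    p.support ⊆ S := by
  induction hp using Submodule.span_induction with
  | mem x hx =>
    obtain ⟨s, rfl⟩ := hx
    exact (support_monomial_subset).trans (by simp)
  | zero => simp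
  | add x y _ _ hx hy => exact support_add.trans (Finset.union_subset hx hy)
  | smul a x _ hx => exact (support_smul).trans hx

lemma finrank_quot_monomial_span (T : Set (Fin 2 →₀ ℕ)) (S : Finset (Fin 2 →₀ ℕ))
    (h : ∀ d : Fin 2 →₀ ℕ, d ∈ S ↔ ¬ ∃ t ∈ T, t ≤ d) :
    Module.finrank k
      (MvPolynomial (Fin 2) k ⧸ Ideal.span ((fun s => monomial s (1:k)) '' T)) = S.card := by
  set J : Ideal (MvPolynomial (Fin 2) k) := Ideal.span ((fun s => monomial s (1:k)) '' T) with hJ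
  set q : MvPolynomial (Fin 2) k →ₗ[k] (MvPolynomial (Fin 2) k ⧸ J) :=
    (Ideal.Quotient.mkₐ k J).toLinearMap with hq
  have hker : ∀ p, q p = 0 ↔ p ∈ J := fun p => Ideal.Quotient.eq_zero_iff_mem
  set v : S → (MvPolynomial (Fin 2) k ⧸ J) := fun s => q (monomial (s : Fin 2 →₀ ℕ) 1) with hv
  have hu : LinearIndependent k (fun s : S => monomial (s : Fin 2 →₀ ℕ) (1:k)) := by
    have := (basisMonomials (Fin 2) k).linearIndependent
    rw [show (fun s : S => monomial (s : Fin 2 →₀ ℕ) (1:k))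
        = (basisMonomials (Fin 2) k) ∘ (fun s : S => (s : Fin 2 →₀ ℕ)) by
      funext s; simp [coe_basisMonomials]]
    exact this.comp _ Subtype.val_injective
  have hli : LinearIndependent k v := by
    apply hu.map (f := q)
    rw [Submodule.disjoint_def]
    intro p hp1 hp2
    have hsupp : p.support ⊆ S := supp_subset_of_mem_span k S p hp1
    have hpJ : p ∈ J := (hker p).mp hp2
    rw [hJ, mem_ideal_span_monomial_image] at hpJ
    have hps : p.support = ∅ := by
      by_contra hne
      obtain ⟨d, hd⟩ := Finset.nonempty_iff_ne_empty.mpr hne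
      exact ((h d).mp (hsupp hd)) (hpJ d hd)
    ext d
    by_contra hc
    exact (Finset.notMem_empty d) (hps ▸ MvPolynomial.mem_support_iff.mpr (by simpa using hc))
  have himg : q '' (Set.range fun d : (Fin 2 →₀ ℕ) => monomial d (1:k))
      ⊆ ↑(Submodule.span k (Set.range v)) := by
    rintro _ ⟨_, ⟨d, rfl⟩, rfl⟩
    by_cases hd : d ∈ S
    · exact Submodule.subset_span ⟨⟨d, hd⟩, rfl⟩
    · have hmem : monomial d (1:k) ∈ J := by
        rw [hJ, mem_ideal_span_monomial_image]
        intro xi hxi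
        have hxd : xi = d := by
          have := support_monomial_subset hxi
          simpa using this
        subst hxd
        by_contra hc
        exact hd ((h xi).mpr hc)
      rw [(hker _).mpr hmem]
      exact zero_mem _
  have hsp : ⊤ ≤ Submodule.span k (Set.range v) := by
    intro x _
    obtain ⟨p, rfl⟩ := Ideal.Quotient.mk_surjective (I := J) x
    have hx : (Ideal.Quotient.mk J p : MvPolynomial (Fin 2) k ⧸ J) = q p := rfl
    rw [hx]
    have hp : p ∈ Submodule.span k (Set.range fun d : (Fin 2 →₀ ℕ) => monomial d (1:k)) := by
      rw [show (Set.range fun d : (Fin 2 →₀ ℕ) => monomial d (1:k))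
          = Set.range (basisMonomials (Fin 2) k) by
        funext; rw [coe_basisMonomials], (basisMonomials (Fin 2) k).span_eq]
      trivial
    have hmm := Submodule.mem_map_of_mem (f := q) hp
    rw [Submodule.map_span] at hmm
    exact Submodule.span_le.mpr himg hmm
  rw [Module.finrank_eq_card_basis (Module.Basis.mk hli hsp), Fintype.card_coe]

lemma monomial_as_prod (d : Fin 2 →₀ ℕ) :
    monomial d (1:k) = X 0 ^ (d 0) * X 1 ^ (d 1) := by
  rw [X_pow_eq_monomial, X_pow_eq_monomial, monomial_mul, mul_one, ← fin2_decomp]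

lemma span_deg (j : ℕ) :
    (Ideal.span {X 0, X 1} : Ideal (MvPolynomial (Fin 2) k)) ^ j
      = Ideal.span ((fun s => monomial s (1:k)) '' {d | d 0 + d 1 = j}) := by
  apply le_antisymm
  · induction j with
    | zero =>
      rw [pow_zero, Ideal.one_eq_top]
      have : (1 : MvPolynomial (Fin 2) k) ∈
          Ideal.span ((fun s => monomial s (1:k)) '' {d | d 0 + d 1 = 0}) := by
        apply Ideal.subset_span
        exact ⟨0, by simp, by simp [monomial_zero']⟩
      rw [← Ideal.eq_top_iff_one] at this
      rw [this]
    | succ j ih =>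
      rw [pow_succ]
      refine le_trans (Ideal.mul_mono_left ih) ?_
      rw [Ideal.span_mul_span']
      apply Ideal.span_le.mpr
      rintro z hz
      rw [Set.mem_mul] at hz
      obtain ⟨x, hx, y, hy, rfl⟩ := hz
      obtain ⟨d, hd, rfl⟩ := hx
      rcases hy with rfl | rfl
      · apply Ideal.subset_span
        refine ⟨d + Finsupp.single 0 1, ?_, ?_⟩
        · simp only [Set.mem_setOf_eq, Finsupp.add_apply, s00, s01] at *
          omega
        · rw [show (X 0 : MvPolynomial (Fin 2) k) = monomial (Finsupp.single 0 1) 1 by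
            rw [← X_pow_eq_monomial, pow_one], monomial_mul, mul_one]
      · apply Ideal.subset_span
        refine ⟨d + Finsupp.single 1 1, ?_, ?_⟩
        · simp only [Set.mem_setOf_eq, Finsupp.add_apply, s10, s11] at *
          omega
        · rw [show (X 1 : MvPolynomial (Fin 2) k) = monomial (Finsupp.single 1 1) 1 by
            rw [← X_pow_eq_monomial, pow_one], monomial_mul, mul_one]
  · apply Ideal.span_le.mpr
    rintro _ ⟨d, hd, rfl⟩
    show monomial d (1:k) ∈ _
    rw [monomial_as_prod]
    have h0 : (X 0 : MvPolynomial (Fin 2) k) ∈ Ideal.span {X 0, X 1} :=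
      Ideal.subset_span (by simp)
    have h1 : (X 1 : MvPolynomial (Fin 2) k) ∈ Ideal.span {X 0, X 1} :=
      Ideal.subset_span (by simp)
    have := Ideal.mul_mem_mul (Ideal.pow_mem_pow h0 (d 0)) (Ideal.pow_mem_pow h1 (d 1))
    rwa [← pow_add, hd] at this

lemma sup_eq_span_T (r n : ℕ) :
    (Ideal.span {(X 0 : MvPolynomial (Fin 2) k) ^ 2, X 0 * X 1 ^ r}
        ⊔ (Ideal.span {X 0, X 1} : Ideal (MvPolynomial (Fin 2) k)) ^ (n+1))
      = Ideal.span ((fun s => monomial s (1:k)) '' Tset r n) := by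
  have h1 : (X 0 : MvPolynomial (Fin 2) k) ^ 2 = monomial (Finsupp.single 0 2) 1 :=
    X_pow_eq_monomial
  have h2 : (X 0 : MvPolynomial (Fin 2) k) * X 1 ^ r
      = monomial (Finsupp.single 0 1 + Finsupp.single 1 r) 1 := by
    rw [show (X 0 : MvPolynomial (Fin 2) k) = monomial (Finsupp.single 0 1) 1 by
      rw [← X_pow_eq_monomial, pow_one], X_pow_eq_monomial, monomial_mul, mul_one]
  rw [Tset, Set.image_union, Ideal.span_union, span_deg k (n+1), h1, h2]
  congr 1
  rw [Set.image_insert_eq, Set.image_singleton]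

lemma main_finrank (r n : ℕ)
    (I : Ideal (MvPolynomial (Fin 2) k))
    (hI : I = Ideal.span {(X 0 : MvPolynomial (Fin 2) k) ^ 2,
      (X 0 : MvPolynomial (Fin 2) k) * (X 1 : MvPolynomial (Fin 2) k) ^ r})
    (m : Ideal (MvPolynomial (Fin 2) k ⧸ I))
    (hm : m = Ideal.span {Ideal.Quotient.mk I (X 0), Ideal.Quotient.mk I (X 1)}) :
    Module.finrank k ((MvPolynomial (Fin 2) k ⧸ I) ⧸ m ^ (n + 1)) = (n + 1) + min r n := by
  subst hm
  have hmap : Ideal.span {Ideal.Quotient.mk I (X 0), Ideal.Quotient.mk I (X 1)}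
      = Ideal.map (Ideal.Quotient.mk I) (Ideal.span {X 0, X 1}) := by
    rw [Ideal.map_span, Set.image_insert_eq, Set.image_singleton]
  rw [hmap, ← Ideal.map_pow]
  have e : Module.finrank k ((MvPolynomial (Fin 2) k ⧸ I) ⧸
        Ideal.map (Ideal.Quotient.mk I)
          ((Ideal.span {X 0, X 1} : Ideal (MvPolynomial (Fin 2) k)) ^ (n+1)))
      = Module.finrank k (MvPolynomial (Fin 2) k ⧸
          (I ⊔ (Ideal.span {X 0, X 1} : Ideal (MvPolynomial (Fin 2) k)) ^ (n+1))) :=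
    (DoubleQuot.quotQuotEquivQuotSupₐ k I _).toLinearEquiv.finrank_eq
  rw [e, hI, sup_eq_span_T k r n,
    finrank_quot_monomial_span k (Tset r n) (Sset r n) (Sset_compl r n), Sset_card]

end Stmt12Aux

set_option synthInstance.maxHeartbeats 1000000 in
set_option maxHeartbeats 1000000 in
theorem stmt12 (k : Type*) [Field k] (r : ℕ) (hr : 1 ≤ r)
    (I : Ideal (MvPolynomial (Fin 2) k))
    (hI : I = Ideal.span {(X 0 : MvPolynomial (Fin 2) k) ^ 2,
      (X 0 : MvPolynomial (Fin 2) k) * (X 1 : MvPolynomial (Fin 2) k) ^ r})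
    (m : Ideal (MvPolynomial (Fin 2) k ⧸ I))
    (hm : m = Ideal.span {Ideal.Quotient.mk I (X 0), Ideal.Quotient.mk I (X 1)}) :
    (∀ n : ℕ, n ≤ r →
        Module.finrank k ((MvPolynomial (Fin 2) k ⧸ I) ⧸ m ^ (n + 1)) = 2 * n + 1) ∧
      (∀ n : ℕ, r < n →
        Module.finrank k ((MvPolynomial (Fin 2) k ⧸ I) ⧸ m ^ (n + 1)) = n + r + 1) := by
  constructor
  · intro n hn
    rw [Stmt12Aux.main_finrank k r n I hI m hm]
    omega
  · intro n hn
    rw [Stmt12Aux.main_finrank k r n I hI m hm]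
    omega
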